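/- Let G be a k × n matrix over ZMod 2 of rank k generating the binary linear [n,k]-code C with weight distribution (A_i)_{i=0}^{n}, and let the n input bits be independent and identically distributed with common 1-probability p satisfying 0 ≤ p < 1/2. Then the most probable output of the corrector is the all-zero vector, and the maximal output probability equals the bound exactly: max_{y} P_p[{x : G.mulVec x = y}] = P_p[{x : G.mulVec x = 0}] = 2^{−k} · Σ_{i=0}^{n} A_i · (1 − 2p)^i. -/

import Mathlib

open Finset

noncomputable def chi2 (b : ZMod 2) : ℝ := if b = 0 then 1 else -1

lemma zmod2_cases : ∀ a : ZMod 2, a = 0 ∨ a = 1 := by decide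

lemma chi2_add (a b : ZMod 2) : chi2 (a + b) = chi2 a * chi2 b := by
  rcases zmod2_cases a with h | h <;> rcases zmod2_cases b with h' | h' <;>
    subst h <;> subst h' <;>
    simp only [chi2, show ((1:ZMod 2)+1) = 0 from by decide, add_zero, zero_add,
      if_pos rfl, one_ne_zero, if_neg] <;> norm_num

lemma chi2_sub (a b : ZMod 2) : chi2 (a - b) = chi2 a * chi2 b := by
  rcases zmod2_cases a with h | h <;> rcases zmod2_cases b with h' | h' <;>
    subst h <;> subst h' <;>
    simp only [chi2, show ((0:ZMod 2)-1) = 1 from by decide,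
      show ((1:ZMod 2)-1) = 0 from by decide, sub_zero,
      if_pos rfl, one_ne_zero, if_neg] <;> norm_num

lemma chi2_le_one (a : ZMod 2) : chi2 a ≤ 1 := by
  rcases zmod2_cases a with h | h <;> subst h <;> norm_num [chi2]

lemma chi2_sum {ι : Type*} (s : Finset ι) (g : ι → ZMod 2) :
    chi2 (∑ j ∈ s, g j) = ∏ j ∈ s, chi2 (g j) := by
  classical
  induction s using Finset.induction with
  | empty => simp [chi2]
  | insert a s h ih => rw [Finset.sum_insert h, Finset.prod_insert h, chi2_add, ih]

lemma sum_zmod2 (f : ZMod 2 → ℝ) : ∑ b : ZMod 2, f b = f 0 + f 1 := by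
  rw [show (Finset.univ : Finset (ZMod 2)) = {0, 1} by decide]
  simp

/-- The Fourier orthogonality relation. -/
lemma sum_chi2 {k : ℕ} (z : Fin k → ZMod 2) :
    ∑ u : Fin k → ZMod 2, chi2 (∑ j, u j * z j) = if z = 0 then (2:ℝ)^k else 0 := by
  classical
  have h1 : ∀ u : Fin k → ZMod 2, chi2 (∑ j, u j * z j) = ∏ j, chi2 (u j * z j) :=
    fun u => chi2_sum _ _
  simp_rw [h1]
  rw [← Fintype.prod_sum (fun j b => chi2 (b * z j))]
  have h2 : ∀ j, ∑ b : ZMod 2, chi2 (b * z j) = if z j = 0 then (2:ℝ) else 0 := by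
    intro j
    rw [sum_zmod2]
    rcases zmod2_cases (z j) with h | h <;> rw [h] <;> norm_num [chi2]
  simp_rw [h2]
  by_cases hz : z = 0
  · subst hz; simp
  · rw [if_neg hz]
    obtain ⟨j, hj⟩ : ∃ j, z j ≠ 0 := by
      by_contra h; push_neg at h; exact hz (funext h)
    exact Finset.prod_eq_zero (Finset.mem_univ j) (by rw [if_neg hj])

/-- Weight enumerator formula for the probability mass function. -/
lemma prob_prod {n : ℕ} (p : ℝ) (x : Fin n → ZMod 2) :
    p ^ hammingNorm x * (1 - p) ^ (n - hammingNorm x) =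
      ∏ j, (if x j = 0 then 1 - p else p) := by
  rw [Finset.prod_ite]
  simp only [Finset.prod_const]
  have h1 : #(Finset.univ.filter (fun j => ¬ x j = 0)) = hammingNorm x := by
    rw [hammingNorm]
  have h2 : #(Finset.univ.filter (fun j => x j = 0)) = n - hammingNorm x := by
    have : (Finset.univ.filter (fun j => x j = 0)) =
        (Finset.univ.filter (fun j => ¬ x j = 0))ᶜ := by
      ext j; simp
    rw [this, Finset.card_compl, Fintype.card_fin, h1]
  rw [h1, h2, mul_comm]

/-- Key character sum: `∑ x, χ(c·x) f(x) = (1-2p)^{wt c}`. -/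
lemma char_sum {n : ℕ} (p : ℝ) (c : Fin n → ZMod 2) :
    ∑ x : Fin n → ZMod 2, chi2 (∑ i, c i * x i) *
      (p ^ hammingNorm x * (1 - p) ^ (n - hammingNorm x)) =
      (1 - 2 * p) ^ hammingNorm c := by
  have h1 : ∀ x : Fin n → ZMod 2, chi2 (∑ i, c i * x i) *
      (p ^ hammingNorm x * (1 - p) ^ (n - hammingNorm x)) =
      ∏ i, (chi2 (c i * x i) * (if x i = 0 then 1 - p else p)) := by
    intro x
    rw [prob_prod, chi2_sum, ← Finset.prod_mul_distrib]
  simp_rw [h1]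
  rw [← Fintype.prod_sum (fun i b => chi2 (c i * b) * (if b = 0 then 1 - p else p))]
  have h2 : ∀ i, ∑ b : ZMod 2, chi2 (c i * b) * (if b = 0 then 1 - p else p) =
      if c i = 0 then 1 else 1 - 2 * p := by
    intro i
    rcases zmod2_cases (c i) with h | h <;> rw [sum_zmod2, h] <;> norm_num [chi2] <;> ring
  simp_rw [h2]
  rw [Finset.prod_ite]
  simp only [Finset.prod_const, one_pow, one_mul]
  rw [hammingNorm]

lemma dot_mulVec {n k : ℕ} (G : Matrix (Fin k) (Fin n) (ZMod 2))
    (u : Fin k → ZMod 2) (x : Fin n → ZMod 2) :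
    ∑ j, u j * G.mulVec x j = ∑ i, Matrix.vecMul u G i * x i := by
  simp only [Matrix.mulVec, Matrix.vecMul, dotProduct, Finset.mul_sum,
    Finset.sum_mul, mul_assoc]
  rw [Finset.sum_comm]

open Classical in
theorem corrector_key {n k : ℕ} (G : Matrix (Fin k) (Fin n) (ZMod 2))
    (p : ℝ) (y : Fin k → ZMod 2) :
    (∑ x : Fin n → ZMod 2,
      if G.mulVec x = y then p ^ hammingNorm x * (1 - p) ^ (n - hammingNorm x) else 0) =
    ((2:ℝ)^k)⁻¹ * ∑ u : Fin k → ZMod 2,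
      chi2 (∑ j, u j * y j) * (1 - 2*p) ^ hammingNorm (Matrix.vecMul u G) := by
  have h2k : ((2:ℝ)^k) ≠ 0 := by positivity
  calc (∑ x : Fin n → ZMod 2,
      if G.mulVec x = y then p ^ hammingNorm x * (1 - p) ^ (n - hammingNorm x) else 0)
      = ∑ x : Fin n → ZMod 2, ((2:ℝ)^k)⁻¹ *
          ∑ u : Fin k → ZMod 2, chi2 (∑ j, u j * (G.mulVec x - y) j) *
            (p ^ hammingNorm x * (1 - p) ^ (n - hammingNorm x)) := by
        apply Finset.sum_congr rfl
        intro x _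
        rw [← Finset.sum_mul, sum_chi2 (G.mulVec x - y)]
        by_cases h : G.mulVec x = y
        · rw [if_pos h, if_pos (by rw [h, sub_self]), inv_mul_cancel_left₀ h2k]
        · rw [if_neg h, if_neg (fun hc => h (sub_eq_zero.mp hc)), zero_mul, mul_zero]
    _ = ((2:ℝ)^k)⁻¹ * ∑ u : Fin k → ZMod 2,
          chi2 (∑ j, u j * y j) * (1 - 2*p) ^ hammingNorm (Matrix.vecMul u G) := by
        rw [← Finset.mul_sum]
        congr 1
        rw [Finset.sum_comm]
        apply Finset.sum_congr rfl
        intro u _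
        have hsplit : ∀ x : Fin n → ZMod 2,
            chi2 (∑ j, u j * (G.mulVec x - y) j) =
            chi2 (∑ j, u j * y j) * chi2 (∑ i, Matrix.vecMul u G i * x i) := by
          intro x
          have : (∑ j, u j * (G.mulVec x - y) j) =
              (∑ j, u j * G.mulVec x j) - (∑ j, u j * y j) := by
            rw [← Finset.sum_sub_distrib]
            apply Finset.sum_congr rfl
            intro j _
            rw [Pi.sub_apply, mul_sub]
          rw [this, chi2_sub, dot_mulVec, mul_comm]
        simp_rw [hsplit, mul_assoc]
        rw [← Finset.mul_sum, char_sum]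

open Classical in
lemma weight_count {n k : ℕ} (G : Matrix (Fin k) (Fin n) (ZMod 2)) (hG : G.rank = k)
    (A : ℕ → ℕ)
    (hA : ∀ i, A i = Nat.card {c : Fin n → ZMod 2 //
      c ∈ Submodule.span (ZMod 2) (Set.range fun j => G j) ∧ hammingNorm c = i})
    (t : ℝ) :
    ∑ u : Fin k → ZMod 2, t ^ hammingNorm (Matrix.vecMul u G) =
      ∑ i ∈ Finset.range (n + 1), (A i : ℝ) * t ^ i := by
  -- injectivity of `u ↦ u ᵥ* G`
  have h1 : G.vecMulLinear = G.transpose.mulVecLin := by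
    rw [← Matrix.vecMulLinear_transpose, Matrix.transpose_transpose]
  have hrank : Module.finrank (ZMod 2) (LinearMap.range G.transpose.mulVecLin) = k := by
    rw [show Module.finrank (ZMod 2) (LinearMap.range G.transpose.mulVecLin) = G.transpose.rank from rfl,
      Matrix.rank_transpose, hG]
  have hker : LinearMap.ker G.vecMulLinear = ⊥ := by
    rw [h1]
    have h2 := LinearMap.finrank_range_add_finrank_ker (G.transpose.mulVecLin)
    rw [hrank, show Module.finrank (ZMod 2) (Fin k → ZMod 2) = k by simp] at h2
    exact Submodule.finrank_eq_zero.mp (by omega)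
  have hinj : Function.Injective (fun u : Fin k → ZMod 2 => Matrix.vecMul u G) := by
    intro u v huv
    exact LinearMap.ker_eq_bot.mp hker huv
  -- range of `u ↦ u ᵥ* G` is the row span
  have hrange : ∀ c : Fin n → ZMod 2,
      (∃ u, Matrix.vecMul u G = c) ↔
        c ∈ Submodule.span (ZMod 2) (Set.range fun j => G j) := by
    intro c
    have := range_vecMulLinear G
    constructor
    · rintro ⟨u, rfl⟩
      have : Matrix.vecMul u G ∈ LinearMap.range G.vecMulLinear := ⟨u, rfl⟩
      rwa [range_vecMulLinear] at this
    · intro hc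
      rw [show (Set.range fun j => G j) = Set.range G.row from rfl, ← range_vecMulLinear] at hc
      obtain ⟨u, hu⟩ := hc
      exact ⟨u, hu⟩
  set T : Finset (Fin n → ZMod 2) :=
    Finset.univ.filter (fun c => c ∈ Submodule.span (ZMod 2) (Set.range fun j => G j)) with hT
  have himg : Finset.univ.image (fun u : Fin k → ZMod 2 => Matrix.vecMul u G) = T := by
    ext c
    simp only [Finset.mem_image, Finset.mem_filter, Finset.mem_univ, true_and, hT]
    exact hrange c
  have hstep : ∑ u : Fin k → ZMod 2, t ^ hammingNorm (Matrix.vecMul u G) =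
      ∑ c ∈ T, t ^ hammingNorm c := by
    rw [← himg, Finset.sum_image (fun a _ b _ h => hinj h)]
  rw [hstep]
  have hmap : ∀ c ∈ T, hammingNorm c ∈ Finset.range (n + 1) := by
    intro c _
    refine Finset.mem_range.mpr (Nat.lt_succ_of_le ?_)
    simpa using (hammingNorm_le_card_fintype (x := c))
  rw [← Finset.sum_fiberwise_of_maps_to hmap (fun c => t ^ hammingNorm c)]
  apply Finset.sum_congr rfl
  intro i _
  have hconst : ∑ c ∈ T.filter (fun c => hammingNorm c = i), t ^ hammingNorm c =
      ∑ c ∈ T.filter (fun c => hammingNorm c = i), t ^ i := by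
    apply Finset.sum_congr rfl
    intro c hc
    rw [(Finset.mem_filter.mp hc).2]
  rw [hconst, Finset.sum_const, nsmul_eq_mul]
  congr 1
  rw [hA i, Nat.card_eq_fintype_card, Fintype.card_subtype]
  norm_cast
  rw [hT, Finset.filter_filter]

open Classical in
/-- Probability of a set of bit-vectors under `n` independent identically distributed bits,
each equal to `1` with probability `p`. -/
noncomputable def probIID {n : ℕ} (p : ℝ) (S : Set (Fin n → ZMod 2)) : ℝ :=
  ∑ x : Fin n → ZMod 2,
    if x ∈ S then p ^ hammingNorm x * (1 - p) ^ (n - hammingNorm x) else 0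

/-- For i.i.d. input bits with common 1-probability `0 ≤ p < 1/2`, the most
probable output of the linear corrector `x ↦ G.mulVec x` is the all-zero vector, and its
probability equals `2 ^ (-k) * ∑ i, A i * (1 - 2p) ^ i` exactly. -/
theorem corrector_iid_exact {n k : ℕ}
    (G : Matrix (Fin k) (Fin n) (ZMod 2)) (hG : G.rank = k)
    (A : ℕ → ℕ)
    (hA : ∀ i, A i = Nat.card {c : Fin n → ZMod 2 //
      c ∈ Submodule.span (ZMod 2) (Set.range fun j => G j) ∧ hammingNorm c = i})
    (p : ℝ) (hp0 : 0 ≤ p) (hp1 : p < 1 / 2) :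
    (∀ y : Fin k → ZMod 2,
        probIID p {x | G.mulVec x = y} ≤ probIID p {x | G.mulVec x = 0}) ∧
    probIID p {x : Fin n → ZMod 2 | G.mulVec x = 0} =
      (2 : ℝ) ^ (-(k : ℝ)) *
        ∑ i ∈ Finset.range (n + 1), (A i : ℝ) * (1 - 2 * p) ^ i := by
  have hT : (0:ℝ) ≤ 1 - 2 * p := by linarith
  have key : ∀ y : Fin k → ZMod 2, probIID p {x | G.mulVec x = y} =
      ((2:ℝ)^k)⁻¹ * ∑ u : Fin k → ZMod 2,
        chi2 (∑ j, u j * y j) * (1 - 2*p) ^ hammingNorm (Matrix.vecMul u G) := by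
    intro y
    rw [probIID]
    simp only [Set.mem_setOf_eq]
    convert corrector_key G p y using 2
  have key0 : probIID p {x : Fin n → ZMod 2 | G.mulVec x = 0} =
      ((2:ℝ)^k)⁻¹ * ∑ u : Fin k → ZMod 2,
        (1 - 2*p) ^ hammingNorm (Matrix.vecMul u G) := by
    rw [key 0]
    congr 1
    apply Finset.sum_congr rfl
    intro u _
    simp only [Pi.zero_apply, mul_zero, Finset.sum_const_zero]
    rw [show chi2 (0:ZMod 2) = 1 from by norm_num [chi2], one_mul]
  constructor
  · intro y
    rw [key y, key0]
    refine mul_le_mul_of_nonneg_left ?_ (by positivity)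
    apply Finset.sum_le_sum
    intro u _
    exact mul_le_of_le_one_left (pow_nonneg hT _) (chi2_le_one _)
  · rw [key0, weight_count G hG A hA]
    congr 1
    rw [Real.rpow_neg (by norm_num : (0:ℝ) ≤ 2), Real.rpow_natCast]
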